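/- Let B = {f_1,…,f_N} be a linearly independent set of functions ℝ^n → ℝ that is symmetric under the action (σ • f)(x) = f(σ⁻¹ • x), and let F = span(B). Let P = {a_1,…,a_N} and P̃ = {ã_1,…,ã_N} be two symmetric N-element subsets of ℝ^n such that the Lagrange interpolation problem with space F is unisolvent both with nodes P and with nodes P̃. Then P and P̃ are equivalent as S_n-sets: there exists a bijection ψ : P → P̃ with ψ(σ • a) = σ • ψ(a) for all σ ∈ S_n and a ∈ P. -/

import Mathlib

/-- The action of `S_n` on `ℝ^n` by permuting coordinates: `σ • x = x ∘ σ⁻¹`. -/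
def psmul {n : ℕ} (σ : Equiv.Perm (Fin n)) (x : Fin n → ℝ) : Fin n → ℝ := x ∘ ⇑σ⁻¹

/-- The action of `S_n` on functions `ℝ^n → ℝ`: `(σ • f)(x) = f(σ⁻¹ • x)`. -/
def fsmul {n : ℕ} (σ : Equiv.Perm (Fin n)) (f : (Fin n → ℝ) → ℝ) : (Fin n → ℝ) → ℝ :=
  fun x => f (psmul σ⁻¹ x)

/-- Two subsets of `ℝ^n` are equivalent as `S_n`-sets: there is an `S_n`-equivariant
bijection between them. -/
def SEquiv {n : ℕ} (X Y : Set (Fin n → ℝ)) : Prop :=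
  ∃ ψ : X ≃ Y, ∀ (σ : Equiv.Perm (Fin n)) (z w : X),
    psmul σ (z : Fin n → ℝ) = (w : Fin n → ℝ) →
      psmul σ ((ψ z : Fin n → ℝ)) = ((ψ w : Fin n → ℝ))

/-- The Lagrange interpolation problem with interpolation space `F` and nodes
`a 1, …, a N` is unisolvent. -/
def Unisolvent {n N : ℕ} (F : Submodule ℝ ((Fin n → ℝ) → ℝ))
    (a : Fin N → (Fin n → ℝ)) : Prop :=
  ∀ b : Fin N → ℝ, ∃! f : F, ∀ i, (f : (Fin n → ℝ) → ℝ) (a i) = b i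


attribute [local instance] Classical.propDecidable

namespace Stmt16

variable {n N : ℕ}

instance : MulAction (Equiv.Perm (Fin n)) (Fin n → ℝ) where
  smul := psmul
  one_smul x := rfl
  mul_smul σ τ x := rfl

lemma smul_def (σ : Equiv.Perm (Fin n)) (x : Fin n → ℝ) : σ • x = x ∘ ⇑σ⁻¹ := rfl

lemma psmul_eq_smul (σ : Equiv.Perm (Fin n)) (x : Fin n → ℝ) : psmul σ x = σ • x := rfl

abbrev stab (x : Fin n → ℝ) : Subgroup (Equiv.Perm (Fin n)) :=
  MulAction.stabilizer (Equiv.Perm (Fin n)) x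

lemma smul_eq_iff_forall {σ : Equiv.Perm (Fin n)} {x : Fin n → ℝ} :
    σ • x = x ↔ ∀ i, x (σ i) = x i := by
  constructor
  · intro h i
    have := congrFun h (σ i)
    simpa [smul_def] using this.symm
  · intro h
    funext i
    have := h (σ⁻¹ i)
    simpa [smul_def] using this.symm

lemma mem_stab {σ : Equiv.Perm (Fin n)} {x : Fin n → ℝ} :
    σ ∈ stab x ↔ ∀ i, x (σ i) = x i := by
  rw [MulAction.mem_stabilizer_iff, smul_eq_iff_forall]

lemma stab_le_iff {x y : Fin n → ℝ} :
    stab x ≤ stab y ↔ ∀ i j, x i = x j → y i = y j := by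
  constructor
  · intro h i j hx
    have hsw : Equiv.swap i j ∈ stab x := by
      rw [mem_stab]
      intro k
      by_cases hki : k = i
      · subst hki; rw [Equiv.swap_apply_left]; exact hx.symm
      by_cases hkj : k = j
      · subst hkj; rw [Equiv.swap_apply_right]; exact hx
      · rw [Equiv.swap_apply_of_ne_of_ne hki hkj]
    have := (mem_stab.mp (h hsw)) i
    rw [Equiv.swap_apply_left] at this
    exact this.symm
  · intro h σ hσ
    rw [mem_stab] at hσ ⊢
    intro i
    exact h _ _ (hσ i)

lemma exists_cyclic (x : Fin n → ℝ) :
    ∃ σ : Equiv.Perm (Fin n), ∀ y : Fin n → ℝ, σ • y = y ↔ stab x ≤ stab y := by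
  classical
  set L : ℝ → List (Fin n) := fun v => Finset.sort (Finset.univ.filter (fun j => x j = v)) (· ≤ ·)
    with hL
  have hmemL : ∀ {i : Fin n} {v : ℝ}, i ∈ L v ↔ x i = v := by
    intro i v
    simp [hL, Finset.mem_sort]
  have hnodup : ∀ v, (L v).Nodup := fun v => Finset.sort_nodup _ _
  set g : Fin n → Fin n := fun i => (L (x i)).formPerm i with hg
  have hgi_mem : ∀ i, g i ∈ L (x i) := fun i =>
    List.formPerm_apply_mem_of_mem (hmemL.mpr rfl)
  have hxg : ∀ i, x (g i) = x i := fun i => hmemL.mp (hgi_mem i)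
  have hginj : Function.Injective g := by
    intro i j hij
    have hx : x i = x j := by
      rw [← hxg i, ← hxg j, hij]
    rw [hg] at hij
    simp only [hx] at hij
    exact (List.formPerm (L (x j))).injective hij
  obtain ⟨σ, hσ⟩ : ∃ σ : Equiv.Perm (Fin n), ∀ i, σ i = g i :=
    ⟨Equiv.ofBijective g (Finite.injective_iff_bijective.mp hginj), fun i => rfl⟩
  have hfib : ∀ (v : ℝ) (z : Fin n), z ∈ L v → σ z = (L v).formPerm z := by
    intro v z hz
    have hxz : x z = v := hmemL.mp hz
    rw [hσ z]
    show (L (x z)).formPerm z = _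
    rw [hxz]
  have hmem_pow : ∀ (v : ℝ) (m : ℕ) (z : Fin n), z ∈ L v → ((L v).formPerm ^ m) z ∈ L v := by
    intro v m
    induction m with
    | zero => intro z hz; simpa using hz
    | succ m ih =>
      intro z hz
      rw [pow_succ, Equiv.Perm.mul_apply]
      exact ih _ (List.formPerm_apply_mem_of_mem hz)
  have hpow : ∀ (v : ℝ) (m : ℕ) (z : Fin n), z ∈ L v → (σ ^ m) z = ((L v).formPerm ^ m) z := by
    intro v m
    induction m with
    | zero => intro z hz; simp
    | succ m ih =>
      intro z hz
      rw [pow_succ', pow_succ', Equiv.Perm.mul_apply, Equiv.Perm.mul_apply, ih z hz,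
        hfib v _ (hmem_pow v m z hz)]
  refine ⟨σ, fun y => ?_⟩
  rw [smul_eq_iff_forall, stab_le_iff]
  constructor
  · intro h i j hx
    -- i and j lie in the same fiber list
    have hi : i ∈ L (x i) := hmemL.mpr rfl
    have hj : j ∈ L (x i) := hmemL.mpr hx.symm
    set l := L (x i) with hl
    obtain ⟨ki, hki, hgi⟩ := List.mem_iff_getElem.mp hi
    obtain ⟨kj, hkj, hgj⟩ := List.mem_iff_getElem.mp hj
    -- power of σ sending i to j
    set m := (l.length - ki) + kj with hm
    have hmod : (ki + m) % l.length = kj := by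
      have : ki + m = l.length + kj := by omega
      rw [this, Nat.add_mod_left, Nat.mod_eq_of_lt hkj]
    have hform : ((l.formPerm) ^ m) i = j := by
      rw [← hgi, List.formPerm_pow_apply_getElem l (hnodup _) m ki hki]
      simp only [hmod]
      exact hgj
    have hσm : (σ ^ m) i = j := by rw [hpow (x i) m i hi, hform]
    have hy : ∀ (k : ℕ) (z : Fin n), y ((σ ^ k) z) = y z := by
      intro k
      induction k with
      | zero => intro z; simp
      | succ k ih =>
        intro z
        rw [pow_succ', Equiv.Perm.mul_apply, h ((σ ^ k) z), ih z]
    rw [← hσm, hy m i]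
  · intro h i
    exact h _ _ (hxg i ▸ (hσ i ▸ rfl : x (σ i) = x (g i)))
/-- Evaluation of functions at the nodes. -/
noncomputable def evmap (a : Fin N → (Fin n → ℝ)) :
    ((Fin n → ℝ) → ℝ) →ₗ[ℝ] (Fin N → ℝ) :=
  LinearMap.pi fun i => LinearMap.proj (a i)

lemma Phi_mem (f : Fin N → ((Fin n → ℝ) → ℝ))
    (hBsym : ∀ σ, ∀ g ∈ Set.range f, fsmul σ g ∈ Set.range f) (σ : Equiv.Perm (Fin n))
    {g : (Fin n → ℝ) → ℝ} (hg : g ∈ Submodule.span ℝ (Set.range f)) :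
    LinearMap.funLeft ℝ ℝ (psmul σ⁻¹) g ∈ Submodule.span ℝ (Set.range f) := by
  induction hg using Submodule.span_induction with
  | mem z hz => exact Submodule.subset_span (hBsym σ z hz)
  | zero => simpa using Submodule.zero_mem _
  | add u v hu hv hu' hv' => simpa [map_add] using Submodule.add_mem _ hu' hv'
  | smul c u hu hu' => simpa [map_smul] using Submodule.smul_mem _ c hu'

/-- The restriction of precomposition to the span. -/
noncomputable def Tmap (f : Fin N → ((Fin n → ℝ) → ℝ))
    (hBsym : ∀ σ, ∀ g ∈ Set.range f, fsmul σ g ∈ Set.range f) (σ : Equiv.Perm (Fin n)) :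
    ↥(Submodule.span ℝ (Set.range f)) →ₗ[ℝ] ↥(Submodule.span ℝ (Set.range f)) :=
  (LinearMap.funLeft ℝ ℝ (psmul σ⁻¹)).restrict fun _ hg => Phi_mem f hBsym σ hg

lemma ev_bijective (f : Fin N → ((Fin n → ℝ) → ℝ)) (a : Fin N → (Fin n → ℝ))
    (hu : Unisolvent (Submodule.span ℝ (Set.range f)) a) :
    Function.Bijective ((evmap a).comp (Submodule.span ℝ (Set.range f)).subtype) := by
  constructor
  · intro g₁ g₂ h
    exact (hu fun i => (g₁ : (Fin n → ℝ) → ℝ) (a i)).unique (fun i => rfl)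
      (fun i => (congrFun h i).symm)
  · intro b
    obtain ⟨g, hg, -⟩ := hu b
    exact ⟨g, funext fun i => hg i⟩

lemma trace_funLeft (τ : Equiv.Perm (Fin N)) :
    LinearMap.trace ℝ (Fin N → ℝ) (LinearMap.funLeft ℝ ℝ ⇑τ)
      = ((Finset.univ.filter fun i => τ i = i).card : ℝ) := by
  classical
  rw [LinearMap.trace_eq_matrix_trace ℝ (Pi.basisFun ℝ (Fin N)), Matrix.trace]
  have hdiag : ∀ i, ((LinearMap.toMatrix (Pi.basisFun ℝ (Fin N)) (Pi.basisFun ℝ (Fin N))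
      (LinearMap.funLeft ℝ ℝ ⇑τ)).diag i) = if τ i = i then (1 : ℝ) else 0 := by
    intro i
    rw [Matrix.diag_apply, LinearMap.toMatrix_apply]
    simp [LinearMap.funLeft_apply, Pi.single_apply]
  rw [Finset.sum_congr rfl fun i _ => hdiag i]
  simp [Finset.sum_boole]
lemma lemA (f : Fin N → ((Fin n → ℝ) → ℝ))
    (hBsym : ∀ σ, ∀ g ∈ Set.range f, fsmul σ g ∈ Set.range f)
    (a : Fin N → (Fin n → ℝ)) (ha : Function.Injective a)
    (hPsym : ∀ σ, ∀ p ∈ Set.range a, psmul σ p ∈ Set.range a)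
    (hu : Unisolvent (Submodule.span ℝ (Set.range f)) a) (σ : Equiv.Perm (Fin n)) :
    ((Finset.univ.filter fun i => psmul σ (a i) = a i).card : ℝ)
      = LinearMap.trace ℝ _ (Tmap f hBsym σ) := by
  classical
  -- the permutation induced by σ on the index set
  have hτex : ∀ i, ∃ j, a j = psmul σ⁻¹ (a i) := fun i => hPsym σ⁻¹ (a i) ⟨i, rfl⟩
  choose t hat using hτex
  have htinj : Function.Injective t := by
    intro i j hij
    apply ha
    have h1 : psmul σ⁻¹ (a i) = psmul σ⁻¹ (a j) := by rw [← hat i, ← hat j, hij]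
    have := congrArg (psmul σ) h1
    simpa [psmul, Function.comp_def] using this
  obtain ⟨τ, hτ⟩ : ∃ τ : Equiv.Perm (Fin N), ∀ i, τ i = t i :=
    ⟨Equiv.ofBijective t (Finite.injective_iff_bijective.mp htinj), fun i => rfl⟩
  set F := Submodule.span ℝ (Set.range f) with hF
  let E : ↥F ≃ₗ[ℝ] (Fin N → ℝ) :=
    LinearEquiv.ofBijective ((evmap a).comp F.subtype) (ev_bijective f a hu)
  have hconj : Tmap f hBsym σ = E.symm.conj (LinearMap.funLeft ℝ ℝ ⇑τ) := by
    apply LinearMap.ext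
    intro g
    apply E.injective
    have hE : ∀ (z : ↥F) (i : Fin N), E z i = (z : (Fin n → ℝ) → ℝ) (a i) := fun z i => rfl
    have : E (E.symm.conj (LinearMap.funLeft ℝ ℝ ⇑τ) g)
        = LinearMap.funLeft ℝ ℝ ⇑τ (E g) := by
      rw [LinearEquiv.conj_apply]
      simp
    rw [this]
    funext i
    rw [hE]
    show (g : (Fin n → ℝ) → ℝ) (psmul σ⁻¹ (a i)) = (E g) (τ i)
    rw [hE, hτ i, hat i]
  rw [hconj, LinearMap.trace_conj', trace_funLeft]
  congr 1
  apply congrArg Finset.card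
  apply Finset.filter_congr
  intro i _
  have h1 : τ i = i ↔ psmul σ⁻¹ (a i) = a i := by
    rw [hτ i]
    constructor
    · intro h; rw [← hat i, h]
    · intro h; apply ha; rw [hat i, h]
  have h2 : psmul σ⁻¹ (a i) = a i ↔ psmul σ (a i) = a i := by
    constructor
    · intro h
      conv_lhs => rw [← h]
      funext k
      simp [psmul]
    · intro h
      conv_lhs => rw [← h]
      funext k
      simp [psmul]
  rw [h1, h2]

section PartB

variable {n : ℕ}

lemma subgroup_card_lt {H K : Subgroup (Equiv.Perm (Fin n))} (h : H < K) :
    Nat.card ↥H < Nat.card ↥K := by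
  have hss : (H : Set (Equiv.Perm (Fin n))) ⊂ (K : Set (Equiv.Perm (Fin n))) :=
    SetLike.lt_iff_le_and_exists.mp h |>.elim (fun hle hex => ⟨hle, by
      obtain ⟨x, hxK, hxH⟩ := hex; intro hsub; exact hxH (hsub hxK)⟩)
  have e1 : Nat.card ↥H = (H : Set (Equiv.Perm (Fin n))).ncard := Nat.card_coe_set_eq _
  have e2 : Nat.card ↥K = (K : Set (Equiv.Perm (Fin n))).ncard := Nat.card_coe_set_eq _
  rw [e1, e2]
  exact Set.ncard_lt_ncard hss (Set.toFinite _)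

lemma subgroup_card_le (H : Subgroup (Equiv.Perm (Fin n))) :
    Nat.card ↥H ≤ Nat.card (Equiv.Perm (Fin n)) :=
  Nat.card_le_card_of_injective _ Subtype.val_injective

/-- Step B1: equality of "upper" counts. -/
lemma lemB1 (P Q : Finset (Fin n → ℝ))
    (hfix : ∀ σ : Equiv.Perm (Fin n),
      (P.filter fun y => σ • y = y).card = (Q.filter fun y => σ • y = y).card)
    (x : Fin n → ℝ) :
    (P.filter fun y => stab x ≤ stab y).card = (Q.filter fun y => stab x ≤ stab y).card := by
  obtain ⟨σ, hσ⟩ := exists_cyclic x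
  have h1 : ∀ R : Finset (Fin n → ℝ),
      (R.filter fun y => stab x ≤ stab y) = (R.filter fun y => σ • y = y) := by
    intro R
    apply Finset.filter_congr
    intro y _
    rw [hσ y]
  rw [h1 P, h1 Q]
  exact hfix σ

/-- Step B2: equality of "exact" counts, by downward induction on the stabilizer. -/
lemma lemB2 (P Q : Finset (Fin n → ℝ))
    (hfix : ∀ σ : Equiv.Perm (Fin n),
      (P.filter fun y => σ • y = y).card = (Q.filter fun y => σ • y = y).card) :
    ∀ x : Fin n → ℝ,
      (P.filter fun y => stab y = stab x).card = (Q.filter fun y => stab y = stab x).card := by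
  have hsplit : ∀ (R : Finset (Fin n → ℝ)) (x : Fin n → ℝ),
      (R.filter fun y => stab x ≤ stab y).card
        = (R.filter fun y => stab y = stab x).card
          + (R.filter fun y => stab x < stab y).card := by
    intro R x
    rw [← Finset.card_union_of_disjoint, ← Finset.filter_or]
    · apply congrArg Finset.card
      apply Finset.filter_congr
      intro y _
      constructor
      · intro h
        rcases eq_or_lt_of_le h with h' | h'
        · exact Or.inl h'.symm
        · exact Or.inr h'
      · rintro (h | h)
        · exact le_of_eq h.symm
        · exact le_of_lt h
    · rw [Finset.disjoint_filter]
      intro y _ h1 h2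
      rw [h1] at h2
      exact lt_irrefl _ h2
  have main : ∀ (k : ℕ) (x : Fin n → ℝ),
      Nat.card (Equiv.Perm (Fin n)) ≤ Nat.card ↥(stab x) + k →
      (P.filter fun y => stab y = stab x).card = (Q.filter fun y => stab y = stab x).card := by
    intro k
    induction k using Nat.strong_induction_on with
    | _ k IH =>
      intro x hk
      -- the common index set of larger stabilizers
      set SS : Finset (Subgroup (Equiv.Perm (Fin n))) :=
        ((P ∪ Q).image stab).filter (fun H => stab x < H) with hSS
      have hsum : ∀ R : Finset (Fin n → ℝ), R ⊆ P ∪ Q →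
          (R.filter fun y => stab x < stab y).card
            = ∑ H ∈ SS, (R.filter fun y => stab y = H).card := by
        intro R hR
        rw [Finset.card_eq_sum_card_fiberwise
          (f := stab) (t := SS) ?_]
        · apply Finset.sum_congr rfl
          intro H hH
          apply congrArg Finset.card
          rw [Finset.filter_filter]
          apply Finset.filter_congr
          intro y _
          rw [hSS] at hH
          have hHlt : stab x < H := (Finset.mem_filter.mp hH).2
          constructor
          · rintro ⟨-, h⟩; exact h
          · intro h; exact ⟨h ▸ hHlt, h⟩
        · intro y hy
          rw [Finset.mem_coe, Finset.mem_filter] at hy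
          rw [Finset.mem_coe, hSS, Finset.mem_filter]
          exact ⟨Finset.mem_image_of_mem stab (hR hy.1), hy.2⟩
      have hterm : ∀ H ∈ SS,
          (P.filter fun y => stab y = H).card = (Q.filter fun y => stab y = H).card := by
        intro H hH
        rw [hSS, Finset.mem_filter, Finset.mem_image] at hH
        obtain ⟨⟨z, hz, hzH⟩, hlt⟩ := hH
        subst hzH
        have hlt' : Nat.card ↥(stab x) < Nat.card ↥(stab z) := subgroup_card_lt hlt
        have hle : Nat.card ↥(stab z) ≤ Nat.card (Equiv.Perm (Fin n)) := subgroup_card_le _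
        exact IH (Nat.card (Equiv.Perm (Fin n)) - Nat.card ↥(stab z)) (by omega) z (by omega)
      have h1 := hsplit P x
      have h2 := hsplit Q x
      have h3 := lemB1 P Q hfix x
      have h4 : (P.filter fun y => stab x < stab y).card
          = (Q.filter fun y => stab x < stab y).card := by
        rw [hsum P Finset.subset_union_left, hsum Q Finset.subset_union_right]
        exact Finset.sum_congr rfl hterm
      omega
  intro x
  exact main (Nat.card (Equiv.Perm (Fin n))) x (by omega)

end PartB

section PartC

variable {n : ℕ}

/-- Conjugation of subgroups. -/
def cj (g : Equiv.Perm (Fin n)) (H : Subgroup (Equiv.Perm (Fin n))) :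
    Subgroup (Equiv.Perm (Fin n)) :=
  H.map (MulAut.conj g).toMonoidHom

lemma mem_cj {g σ : Equiv.Perm (Fin n)} {H : Subgroup (Equiv.Perm (Fin n))} :
    σ ∈ cj g H ↔ g⁻¹ * σ * g ∈ H := by
  rw [cj, Subgroup.mem_map_equiv, MulAut.conj_symm_apply]

lemma cj_one (H : Subgroup (Equiv.Perm (Fin n))) : cj 1 H = H := by
  ext σ; simp [mem_cj]

lemma cj_cj (g g' : Equiv.Perm (Fin n)) (H : Subgroup (Equiv.Perm (Fin n))) :
    cj g' (cj g H) = cj (g' * g) H := by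
  ext σ; simp [mem_cj, mul_assoc]

lemma stab_smul (g : Equiv.Perm (Fin n)) (y : Fin n → ℝ) :
    stab (g • y) = cj g (stab y) :=
  MulAction.stabilizer_smul_eq_stabilizer_map_conj g y

lemma mem_norm_iff_cj {g : Equiv.Perm (Fin n)} {H : Subgroup (Equiv.Perm (Fin n))} :
    g ∈ (Subgroup.normalizer (H : Set (Equiv.Perm (Fin n)))) ↔ cj g H = H := by
  rw [Subgroup.mem_normalizer_iff]
  constructor
  · intro h
    ext σ
    rw [mem_cj]
    have h2 := h (g⁻¹ * σ * g)
    have e : g * (g⁻¹ * σ * g) * g⁻¹ = σ := by group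
    rw [e] at h2
    exact h2
  · intro h k
    constructor
    · intro hk
      have h3 : g⁻¹ * (g * k * g⁻¹) * g ∈ H := by
        have e : g⁻¹ * (g * k * g⁻¹) * g = k := by group
        rwa [e]
      have h2 : g * k * g⁻¹ ∈ cj g H := mem_cj.mpr h3
      rwa [h] at h2
    · intro hk
      have h2 : g * k * g⁻¹ ∈ cj g H := h.symm ▸ hk
      have h3 := mem_cj.mp h2
      have e : g⁻¹ * (g * k * g⁻¹) * g = k := by group
      rwa [e] at h3

/-- Conjugacy setoid on subgroups. -/
def conjSetoid (n : ℕ) : Setoid (Subgroup (Equiv.Perm (Fin n))) where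
  r H K := ∃ g, cj g H = K
  iseqv := by
    refine ⟨fun H => ⟨1, cj_one H⟩, ?_, ?_⟩
    · rintro H K ⟨g, hg⟩
      refine ⟨g⁻¹, ?_⟩
      conv_lhs => rw [← hg]
      rw [cj_cj, inv_mul_cancel, cj_one]
    · rintro H K L ⟨g, hg⟩ ⟨g', hg'⟩
      exact ⟨g' * g, by rw [← cj_cj, hg, hg']⟩

/-- A representative of the conjugacy class of a subgroup. -/
noncomputable def rep (H : Subgroup (Equiv.Perm (Fin n))) : Subgroup (Equiv.Perm (Fin n)) :=
  (Quotient.mk (conjSetoid n) H).out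

lemma rep_eq_of_rel {H K : Subgroup (Equiv.Perm (Fin n))} (h : ∃ g, cj g H = K) :
    rep H = rep K :=
  congrArg Quotient.out (Quotient.sound (s := conjSetoid n) h)

lemma rep_rel (H : Subgroup (Equiv.Perm (Fin n))) : ∃ g, cj g (rep H) = H := by
  have h : (conjSetoid n).r (rep H) H :=
    Quotient.exact ((Quotient.mk (conjSetoid n) H).out_eq)
  exact h

lemma rep_rel' (H : Subgroup (Equiv.Perm (Fin n))) : ∃ g, cj g H = rep H := by
  obtain ⟨g, hg⟩ := rep_rel H
  refine ⟨g⁻¹, ?_⟩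
  conv_lhs => rw [← hg]
  rw [cj_cj, inv_mul_cancel, cj_one]

lemma rep_idem (H : Subgroup (Equiv.Perm (Fin n))) : rep (rep H) = rep H :=
  rep_eq_of_rel (rep_rel H)

lemma rep_realizable (t : Fin n → ℝ) : ∃ x : Fin n → ℝ, stab x = rep (stab t) := by
  obtain ⟨g, hg⟩ := rep_rel' (stab t)
  exact ⟨g • t, by rw [stab_smul, hg]⟩

/-- The relevant "core" set: elements with stabilizer exactly `H`. -/
noncomputable def CH (R : Finset (Fin n → ℝ)) (H : Subgroup (Equiv.Perm (Fin n))) : Finset (Fin n → ℝ) :=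
  R.filter (fun z => stab z = H)

lemma mem_CH {R : Finset (Fin n → ℝ)} {H} {z : Fin n → ℝ} :
    z ∈ CH R H ↔ z ∈ R ∧ stab z = H := Finset.mem_filter

/-- Orbit setoid of the normalizer action on the core. -/
def orbSetoid (C : Finset (Fin n → ℝ)) (H : Subgroup (Equiv.Perm (Fin n))) : Setoid ↥C where
  r y z := ∃ g ∈ (Subgroup.normalizer (H : Set (Equiv.Perm (Fin n)))), g • (y : Fin n → ℝ) = (z : Fin n → ℝ)
  iseqv := by
    refine ⟨fun y => ⟨1, one_mem _, one_smul _ _⟩, ?_, ?_⟩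
    · rintro y z ⟨g, hgN, hg⟩
      exact ⟨g⁻¹, inv_mem hgN, by rw [← hg, inv_smul_smul]⟩
    · rintro y z w ⟨g, hgN, hg⟩ ⟨g', hgN', hg'⟩
      exact ⟨g' * g, mul_mem hgN' hgN, by rw [mul_smul, hg, hg']⟩

/-- Choice of orbit representatives. -/
noncomputable def rorb (R : Finset (Fin n → ℝ)) (H : Subgroup (Equiv.Perm (Fin n)))
    (y : Fin n → ℝ) : Fin n → ℝ :=
  if h : y ∈ CH R H then ((Quotient.mk (orbSetoid (CH R H) H) ⟨y, h⟩).out : Fin n → ℝ)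
  else y

lemma rorb_mem {R : Finset (Fin n → ℝ)} {H} {y : Fin n → ℝ} (h : y ∈ CH R H) :
    rorb R H y ∈ CH R H := by
  rw [rorb, dif_pos h]
  exact ((Quotient.mk (orbSetoid (CH R H) H) ⟨y, h⟩).out).prop

lemma rorb_rel {R : Finset (Fin n → ℝ)} {H} {y : Fin n → ℝ} (h : y ∈ CH R H) :
    ∃ g ∈ (Subgroup.normalizer (H : Set (Equiv.Perm (Fin n)))), g • rorb R H y = y := by
  have h2 := Quotient.exact (s := orbSetoid (CH R H) H)
    ((Quotient.mk (orbSetoid (CH R H) H) ⟨y, h⟩).out_eq)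
  obtain ⟨g, hgN, hg⟩ := h2
  exact ⟨g, hgN, by rw [rorb, dif_pos h]; exact hg⟩

lemma rorb_eq_of_rel {R : Finset (Fin n → ℝ)} {H} {y z : Fin n → ℝ}
    (hy : y ∈ CH R H) (hz : z ∈ CH R H) (hrel : ∃ g ∈ (Subgroup.normalizer (H : Set (Equiv.Perm (Fin n)))), g • y = z) :
    rorb R H y = rorb R H z := by
  rw [rorb, dif_pos hy, rorb, dif_pos hz]
  have : Quotient.mk (orbSetoid (CH R H) H) ⟨y, hy⟩
      = Quotient.mk (orbSetoid (CH R H) H) ⟨z, hz⟩ := Quotient.sound hrel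
  rw [this]

lemma rorb_idem {R : Finset (Fin n → ℝ)} {H} {y : Fin n → ℝ} (h : y ∈ CH R H) :
    rorb R H (rorb R H y) = rorb R H y := by
  obtain ⟨g, hgN, hg⟩ := rorb_rel h
  exact rorb_eq_of_rel (rorb_mem h) h ⟨g, hgN, hg⟩

/-- The set of chosen orbit representatives. -/
noncomputable def RH (R : Finset (Fin n → ℝ)) (H : Subgroup (Equiv.Perm (Fin n))) :
    Finset (Fin n → ℝ) :=
  (CH R H).filter (fun y => rorb R H y = y)

/-- Counting: the core has size (number of orbits) × (size of normalizer quotient). -/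
lemma card_core (R : Finset (Fin n → ℝ))
    (hsymR : ∀ (σ : Equiv.Perm (Fin n)) y, y ∈ R → σ • y ∈ R)
    (H : Subgroup (Equiv.Perm (Fin n))) :
    (CH R H).card = (RH R H).card
      * Nat.card ((Subgroup.normalizer (H : Set (Equiv.Perm (Fin n)))) ⧸ H.subgroupOf (Subgroup.normalizer (H : Set (Equiv.Perm (Fin n))))) := by
  classical
  have fibEquiv : ∀ q : Quotient (orbSetoid (CH R H) H),
      ((Subgroup.normalizer (H : Set (Equiv.Perm (Fin n)))) ⧸ H.subgroupOf (Subgroup.normalizer (H : Set (Equiv.Perm (Fin n))))) ≃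
        {y : ↥(CH R H) // Quotient.mk (orbSetoid (CH R H) H) y = q} := by
    intro q
    have htC : (q.out : Fin n → ℝ) ∈ CH R H := q.out.prop
    have htR : (q.out : Fin n → ℝ) ∈ R := (mem_CH.mp htC).1
    have htstab : stab (q.out : Fin n → ℝ) = H := (mem_CH.mp htC).2
    have memC : ∀ g : ↥(Subgroup.normalizer (H : Set (Equiv.Perm (Fin n)))),
        ((g : Equiv.Perm (Fin n)) • (q.out : Fin n → ℝ)) ∈ CH R H := by
      intro g
      refine mem_CH.mpr ⟨hsymR _ _ htR, ?_⟩
      rw [stab_smul, htstab]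
      exact mem_norm_iff_cj.mp g.prop
    have mkeq : ∀ g : ↥(Subgroup.normalizer (H : Set (Equiv.Perm (Fin n)))),
        Quotient.mk (orbSetoid (CH R H) H)
          (⟨(g : Equiv.Perm (Fin n)) • (q.out : Fin n → ℝ), memC g⟩ : ↥(CH R H)) = q := by
      intro g
      conv_rhs => rw [← Quotient.out_eq q]
      apply Quotient.sound
      exact ⟨(g : Equiv.Perm (Fin n))⁻¹, inv_mem g.prop, by simp [inv_smul_smul]⟩
    set φ : ((Subgroup.normalizer (H : Set (Equiv.Perm (Fin n)))) ⧸ H.subgroupOf (Subgroup.normalizer (H : Set (Equiv.Perm (Fin n))))) →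
        {y : ↥(CH R H) // Quotient.mk (orbSetoid (CH R H) H) y = q} :=
      fun qq => Quotient.liftOn' qq
        (fun g : ↥(Subgroup.normalizer (H : Set (Equiv.Perm (Fin n)))) =>
          (⟨⟨(g : Equiv.Perm (Fin n)) • (q.out : Fin n → ℝ), memC g⟩, mkeq g⟩ :
            {y : ↥(CH R H) // Quotient.mk (orbSetoid (CH R H) H) y = q}))
        (by
          intro g₁ g₂ hrel
          rw [QuotientGroup.leftRel_apply, Subgroup.mem_subgroupOf] at hrel
          apply Subtype.ext
          apply Subtype.ext
          show (g₁ : Equiv.Perm (Fin n)) • (q.out : Fin n → ℝ)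
            = (g₂ : Equiv.Perm (Fin n)) • (q.out : Fin n → ℝ)
          have hmem : ((g₁ : Equiv.Perm (Fin n))⁻¹ * (g₂ : Equiv.Perm (Fin n)))
              ∈ stab (q.out : Fin n → ℝ) := by
            rw [htstab]
            exact_mod_cast hrel
          have hst : ((g₁ : Equiv.Perm (Fin n))⁻¹ * (g₂ : Equiv.Perm (Fin n)))
              • (q.out : Fin n → ℝ) = (q.out : Fin n → ℝ) :=
            MulAction.mem_stabilizer_iff.mp hmem
          calc (g₁ : Equiv.Perm (Fin n)) • (q.out : Fin n → ℝ)
              = (g₁ : Equiv.Perm (Fin n)) •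
                (((g₁ : Equiv.Perm (Fin n))⁻¹ * (g₂ : Equiv.Perm (Fin n)))
                  • (q.out : Fin n → ℝ)) := by rw [hst]
            _ = (g₂ : Equiv.Perm (Fin n)) • (q.out : Fin n → ℝ) := by
                rw [smul_smul]
                congr 1
                group) with hφ
    refine Equiv.ofBijective φ ⟨?_, ?_⟩
    · intro q₁ q₂ hq
      induction q₁ using Quotient.inductionOn' with
      | h g₁ =>
      induction q₂ using Quotient.inductionOn' with
      | h g₂ =>
      have hval : (g₁ : Equiv.Perm (Fin n)) • (q.out : Fin n → ℝ)
          = (g₂ : Equiv.Perm (Fin n)) • (q.out : Fin n → ℝ) :=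
        congrArg (fun z => ((z : ↥(CH R H)) : Fin n → ℝ)) (congrArg Subtype.val hq)
      apply Quotient.sound'
      rw [QuotientGroup.leftRel_apply, Subgroup.mem_subgroupOf]
      have hmem : ((g₁ : Equiv.Perm (Fin n))⁻¹ * (g₂ : Equiv.Perm (Fin n)))
          ∈ stab (q.out : Fin n → ℝ) :=
        MulAction.mem_stabilizer_iff.mpr (by rw [mul_smul, ← hval, inv_smul_smul])
      rw [htstab] at hmem
      exact_mod_cast hmem
    · rintro ⟨⟨y, hyC⟩, hyq⟩
      have hmky : Quotient.mk (orbSetoid (CH R H) H) (⟨y, hyC⟩ : ↥(CH R H))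
          = Quotient.mk (orbSetoid (CH R H) H) q.out := by
        rw [hyq, Quotient.out_eq]
      obtain ⟨g, hgN, hg⟩ := Quotient.exact hmky
      refine ⟨Quotient.mk'' (⟨g⁻¹, inv_mem hgN⟩ : ↥(Subgroup.normalizer (H : Set (Equiv.Perm (Fin n))))), ?_⟩
      apply Subtype.ext
      apply Subtype.ext
      show (((⟨g⁻¹, inv_mem hgN⟩ : ↥(Subgroup.normalizer (H : Set (Equiv.Perm (Fin n))))) : Equiv.Perm (Fin n)))
          • ((q.out : ↥(CH R H)) : Fin n → ℝ) = y
      show g⁻¹ • ((q.out : ↥(CH R H)) : Fin n → ℝ) = y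
      rw [← hg, inv_smul_smul]
  -- summing over the fibers
  have hcard1 : Fintype.card ↥(CH R H)
      = Fintype.card (Quotient (orbSetoid (CH R H) H))
        * Nat.card ((Subgroup.normalizer (H : Set (Equiv.Perm (Fin n)))) ⧸ H.subgroupOf (Subgroup.normalizer (H : Set (Equiv.Perm (Fin n))))) := by
    calc Fintype.card ↥(CH R H)
        = Fintype.card (Σ q : Quotient (orbSetoid (CH R H) H),
            {y : ↥(CH R H) // Quotient.mk (orbSetoid (CH R H) H) y = q}) :=
          (Fintype.card_congr
            (Equiv.sigmaFiberEquiv (Quotient.mk (orbSetoid (CH R H) H))).symm)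
      _ = ∑ q : Quotient (orbSetoid (CH R H) H),
            Fintype.card {y : ↥(CH R H) // Quotient.mk (orbSetoid (CH R H) H) y = q} :=
          Fintype.card_sigma
      _ = ∑ _q : Quotient (orbSetoid (CH R H) H),
            Nat.card ((Subgroup.normalizer (H : Set (Equiv.Perm (Fin n)))) ⧸ H.subgroupOf (Subgroup.normalizer (H : Set (Equiv.Perm (Fin n))))) := by
          apply Finset.sum_congr rfl
          intro q _
          rw [Nat.card_eq_fintype_card]
          exact (Fintype.card_congr (fibEquiv q)).symm
      _ = Fintype.card (Quotient (orbSetoid (CH R H) H))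
            * Nat.card ((Subgroup.normalizer (H : Set (Equiv.Perm (Fin n)))) ⧸ H.subgroupOf (Subgroup.normalizer (H : Set (Equiv.Perm (Fin n))))) := by
          rw [Finset.sum_const, Finset.card_univ, smul_eq_mul]
  -- the representatives are in bijection with the orbits
  have hcard2 : (RH R H).card = Fintype.card (Quotient (orbSetoid (CH R H) H)) := by
    rw [← Fintype.card_coe]
    apply Fintype.card_congr
    have hmem : ∀ y : ↥(RH R H), (y : Fin n → ℝ) ∈ CH R H :=
      fun y => (Finset.mem_filter.mp y.prop).1
    have hrep : ∀ y : ↥(RH R H), rorb R H (y : Fin n → ℝ) = (y : Fin n → ℝ) :=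
      fun y => (Finset.mem_filter.mp y.prop).2
    refine Equiv.ofBijective
      (fun y => Quotient.mk (orbSetoid (CH R H) H) ⟨(y : Fin n → ℝ), hmem y⟩) ⟨?_, ?_⟩
    · intro y z hyz
      obtain ⟨g, hgN, hg⟩ := Quotient.exact hyz
      have := rorb_eq_of_rel (hmem y) (hmem z) ⟨g, hgN, hg⟩
      rw [hrep y, hrep z] at this
      exact Subtype.ext this
    · intro q
      have houtC : ((q.out : ↥(CH R H)) : Fin n → ℝ) ∈ CH R H := q.out.prop
      have hout_rorb : rorb R H ((q.out : ↥(CH R H)) : Fin n → ℝ)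
          = ((q.out : ↥(CH R H)) : Fin n → ℝ) := by
        have heta : (⟨((q.out : ↥(CH R H)) : Fin n → ℝ), houtC⟩ : ↥(CH R H)) = q.out :=
          Subtype.ext rfl
        rw [rorb, dif_pos houtC, heta, Quotient.out_eq]
      refine ⟨⟨((q.out : ↥(CH R H)) : Fin n → ℝ), ?_⟩, ?_⟩
      · exact Finset.mem_filter.mpr ⟨houtC, hout_rorb⟩
      · conv_rhs => rw [← Quotient.out_eq q]
  calc (CH R H).card = Fintype.card ↥(CH R H) := (Fintype.card_coe _).symm
    _ = Fintype.card (Quotient (orbSetoid (CH R H) H))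
          * Nat.card ((Subgroup.normalizer (H : Set (Equiv.Perm (Fin n)))) ⧸ H.subgroupOf (Subgroup.normalizer (H : Set (Equiv.Perm (Fin n))))) := hcard1
    _ = (RH R H).card * Nat.card ((Subgroup.normalizer (H : Set (Equiv.Perm (Fin n)))) ⧸ H.subgroupOf (Subgroup.normalizer (H : Set (Equiv.Perm (Fin n))))) := by
          rw [hcard2]

/-- `t` is a chosen representative: its stabilizer is the chosen conjugacy representative,
and it is the chosen orbit representative. -/
noncomputable def Good (R : Finset (Fin n → ℝ)) (t : Fin n → ℝ) : Prop :=
  t ∈ R ∧ stab t = rep (stab t) ∧ rorb R (stab t) t = t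

lemma good_mem_RH {R : Finset (Fin n → ℝ)} {t : Fin n → ℝ} (h : Good R t) :
    t ∈ RH R (stab t) :=
  Finset.mem_filter.mpr ⟨mem_CH.mpr ⟨h.1, rfl⟩, h.2.2⟩

lemma exists_match (P Q : Finset (Fin n → ℝ))
    (hPsym : ∀ (σ : Equiv.Perm (Fin n)) y, y ∈ P → σ • y ∈ P)
    (hQsym : ∀ (σ : Equiv.Perm (Fin n)) y, y ∈ Q → σ • y ∈ Q)
    (hN : ∀ x : Fin n → ℝ,
      (P.filter fun y => stab y = stab x).card = (Q.filter fun y => stab y = stab x).card)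
    (H : Subgroup (Equiv.Perm (Fin n))) (hreal : ∃ x : Fin n → ℝ, stab x = H) :
    ∃ uv : (((Fin n → ℝ) → (Fin n → ℝ)) × ((Fin n → ℝ) → (Fin n → ℝ))),
      (∀ y ∈ RH P H, uv.1 y ∈ RH Q H) ∧ (∀ z ∈ RH Q H, uv.2 z ∈ RH P H) ∧
      (∀ y ∈ RH P H, uv.2 (uv.1 y) = y) ∧ (∀ z ∈ RH Q H, uv.1 (uv.2 z) = z) := by
  classical
  obtain ⟨x, hx⟩ := hreal
  have hCH : (CH P H).card = (CH Q H).card := by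
    have h := hN x
    rw [hx] at h
    exact h
  have hqpos : 0 < Nat.card ((Subgroup.normalizer (H : Set (Equiv.Perm (Fin n)))) ⧸ H.subgroupOf (Subgroup.normalizer (H : Set (Equiv.Perm (Fin n))))) := by
    have : Nonempty ((Subgroup.normalizer (H : Set (Equiv.Perm (Fin n)))) ⧸ H.subgroupOf (Subgroup.normalizer (H : Set (Equiv.Perm (Fin n))))) := ⟨QuotientGroup.mk 1⟩
    exact Nat.card_pos
  have hRH : (RH P H).card = (RH Q H).card := by
    have h1 := card_core P hPsym H
    have h2 := card_core Q hQsym H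
    rw [hCH, h2] at h1
    exact Nat.eq_of_mul_eq_mul_right hqpos h1.symm
  have e : ↥(RH P H) ≃ ↥(RH Q H) := by
    apply Fintype.equivOfCardEq
    rw [Fintype.card_coe, Fintype.card_coe, hRH]
  refine ⟨⟨fun y => if h : y ∈ RH P H then (e ⟨y, h⟩ : Fin n → ℝ) else y,
          fun z => if h : z ∈ RH Q H then (e.symm ⟨z, h⟩ : Fin n → ℝ) else z⟩,
          ?_, ?_, ?_, ?_⟩
  · intro y hy
    simp only [dif_pos hy]
    exact (e ⟨y, hy⟩).prop
  · intro z hz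
    simp only [dif_pos hz]
    exact (e.symm ⟨z, hz⟩).prop
  · intro y hy
    simp only [dif_pos hy]
    have h2 : ((e ⟨y, hy⟩ : ↥(RH Q H)) : Fin n → ℝ) ∈ RH Q H := (e ⟨y, hy⟩).prop
    rw [dif_pos h2]
    have h3 : (⟨((e ⟨y, hy⟩ : ↥(RH Q H)) : Fin n → ℝ), h2⟩ : ↥(RH Q H)) = e ⟨y, hy⟩ :=
      Subtype.ext rfl
    rw [h3, Equiv.symm_apply_apply]
  · intro z hz
    simp only [dif_pos hz]
    have h2 : ((e.symm ⟨z, hz⟩ : ↥(RH P H)) : Fin n → ℝ) ∈ RH P H := (e.symm ⟨z, hz⟩).prop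
    rw [dif_pos h2]
    have h3 : (⟨((e.symm ⟨z, hz⟩ : ↥(RH P H)) : Fin n → ℝ), h2⟩ : ↥(RH P H)) = e.symm ⟨z, hz⟩ :=
      Subtype.ext rfl
    rw [h3, Equiv.apply_symm_apply]

lemma construct (P Q : Finset (Fin n → ℝ))
    (hPsym : ∀ (σ : Equiv.Perm (Fin n)) y, y ∈ P → σ • y ∈ P)
    (hQsym : ∀ (σ : Equiv.Perm (Fin n)) y, y ∈ Q → σ • y ∈ Q)
    (hN : ∀ x : Fin n → ℝ,
      (P.filter fun y => stab y = stab x).card = (Q.filter fun y => stab y = stab x).card) :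
    ∃ ψ ω : (Fin n → ℝ) → (Fin n → ℝ),
      (∀ y ∈ P, ψ y ∈ Q) ∧ (∀ z ∈ Q, ω z ∈ P) ∧ (∀ y ∈ P, ω (ψ y) = y) ∧
      (∀ z ∈ Q, ψ (ω z) = z) ∧
      (∀ (σ : Equiv.Perm (Fin n)) (y : Fin n → ℝ), y ∈ P → ψ (σ • y) = σ • ψ y) := by
  classical
  have hN' : ∀ x : Fin n → ℝ,
      (Q.filter fun y => stab y = stab x).card = (P.filter fun y => stab y = stab x).card :=
    fun x => (hN x).symm
  -- total matching function
  set uvt : Subgroup (Equiv.Perm (Fin n)) →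
      (((Fin n → ℝ) → (Fin n → ℝ)) × ((Fin n → ℝ) → (Fin n → ℝ))) :=
    fun H => if h : ∃ x : Fin n → ℝ, stab x = H
      then (exists_match P Q hPsym hQsym hN H h).choose else (id, id) with huvt
  have huv1 : ∀ H, (∃ x : Fin n → ℝ, stab x = H) →
      ∀ y ∈ RH P H, (uvt H).1 y ∈ RH Q H := by
    intro H h
    rw [huvt]; simp only [dif_pos h]
    exact (exists_match P Q hPsym hQsym hN H h).choose_spec.1
  have huv2 : ∀ H, (∃ x : Fin n → ℝ, stab x = H) →
      ∀ z ∈ RH Q H, (uvt H).2 z ∈ RH P H := by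
    intro H h
    rw [huvt]; simp only [dif_pos h]
    exact (exists_match P Q hPsym hQsym hN H h).choose_spec.2.1
  have huv3 : ∀ H, (∃ x : Fin n → ℝ, stab x = H) →
      ∀ y ∈ RH P H, (uvt H).2 ((uvt H).1 y) = y := by
    intro H h
    rw [huvt]; simp only [dif_pos h]
    exact (exists_match P Q hPsym hQsym hN H h).choose_spec.2.2.1
  have huv4 : ∀ H, (∃ x : Fin n → ℝ, stab x = H) →
      ∀ z ∈ RH Q H, (uvt H).1 ((uvt H).2 z) = z := by
    intro H h
    rw [huvt]; simp only [dif_pos h]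
    exact (exists_match P Q hPsym hQsym hN H h).choose_spec.2.2.2
  -- the two halves of the matching, as total maps
  set th : (Fin n → ℝ) → (Fin n → ℝ) := fun t => (uvt (rep (stab t))).1 t with hth
  set th' : (Fin n → ℝ) → (Fin n → ℝ) := fun s => (uvt (rep (stab s))).2 s with hth'
  have hTheta : ∀ t, Good P t → th t ∈ RH Q (stab t) := by
    intro t hG
    rw [hth]
    simp only [← hG.2.1]
    exact huv1 (stab t) ⟨t, rfl⟩ t (good_mem_RH hG)
  have hTheta_mem : ∀ t, Good P t → th t ∈ Q :=
    fun t hG => (mem_CH.mp (Finset.mem_filter.mp (hTheta t hG)).1).1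
  have hTheta_stab : ∀ t, Good P t → stab (th t) = stab t :=
    fun t hG => (mem_CH.mp (Finset.mem_filter.mp (hTheta t hG)).1).2
  have hTheta_rorb : ∀ t, Good P t → rorb Q (stab t) (th t) = th t :=
    fun t hG => (Finset.mem_filter.mp (hTheta t hG)).2
  have hGoodQ : ∀ t, Good P t → Good Q (th t) := by
    intro t hG
    refine ⟨hTheta_mem t hG, ?_, ?_⟩
    · rw [hTheta_stab t hG, ← hG.2.1]
    · rw [hTheta_stab t hG]
      exact hTheta_rorb t hG
  have hback : ∀ t, Good P t → th' (th t) = t := by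
    intro t hG
    rw [hth']
    simp only [hTheta_stab t hG, ← hG.2.1]
    have h1 : th t = (uvt (rep (stab t))).1 t := rfl
    rw [h1]
    simp only [← hG.2.1]
    exact huv3 (stab t) ⟨t, rfl⟩ t (good_mem_RH hG)
  -- decomposition of any element of P
  have hdecomp : ∀ y ∈ P, ∃ (g : Equiv.Perm (Fin n)) (t : Fin n → ℝ), Good P t ∧ y = g • t := by
    intro y hy
    obtain ⟨g₁, hg₁⟩ := rep_rel' (stab y)
    have hz : (g₁ • y) ∈ P := hPsym g₁ y hy
    have hzstab : stab (g₁ • y) = rep (stab y) := by rw [stab_smul, hg₁]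
    have hzCH : (g₁ • y) ∈ CH P (rep (stab y)) := mem_CH.mpr ⟨hz, hzstab⟩
    set t := rorb P (rep (stab y)) (g₁ • y) with ht
    have htCH : t ∈ CH P (rep (stab y)) := rorb_mem hzCH
    have htstab : stab t = rep (stab y) := (mem_CH.mp htCH).2
    obtain ⟨m, hmN, hm⟩ := rorb_rel hzCH
    refine ⟨g₁⁻¹ * m, t, ⟨(mem_CH.mp htCH).1, ?_, ?_⟩, ?_⟩
    · rw [htstab, rep_idem]
    · rw [htstab]
      exact rorb_idem hzCH
    · rw [mul_smul, hm, inv_smul_smul]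
  -- well-definedness
  have hWD : ∀ (g₁ g₂ : Equiv.Perm (Fin n)) (t₁ t₂ : Fin n → ℝ),
      Good P t₁ → Good P t₂ → g₁ • t₁ = g₂ • t₂ → g₁ • th t₁ = g₂ • th t₂ := by
    intro g₁ g₂ t₁ t₂ hG₁ hG₂ h
    have hm : (g₂⁻¹ * g₁) • t₁ = t₂ := by rw [mul_smul, h, inv_smul_smul]
    have hstabeq : stab t₂ = cj (g₂⁻¹ * g₁) (stab t₁) := by rw [← stab_smul, hm]
    have hH : stab t₂ = stab t₁ := by
      have hr : rep (stab t₁) = rep (stab t₂) := rep_eq_of_rel ⟨g₂⁻¹ * g₁, hstabeq.symm⟩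
      rw [hG₂.2.1, ← hr, ← hG₁.2.1]
    have hmN : (g₂⁻¹ * g₁) ∈ (Subgroup.normalizer (stab t₁ : Set (Equiv.Perm (Fin n)))) := by
      rw [mem_norm_iff_cj, ← hstabeq]
      exact hH
    have ht₁CH : t₁ ∈ CH P (stab t₁) := mem_CH.mpr ⟨hG₁.1, rfl⟩
    have ht₂CH : t₂ ∈ CH P (stab t₁) := mem_CH.mpr ⟨hG₂.1, hH⟩
    have heq : t₁ = t₂ := by
      have h1 := rorb_eq_of_rel ht₁CH ht₂CH ⟨g₂⁻¹ * g₁, hmN, hm⟩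
      rw [hG₁.2.2] at h1
      have h2 : rorb P (stab t₁) t₂ = t₂ := by
        have := hG₂.2.2
        rw [hH] at this
        exact this
      rw [h2] at h1
      exact h1
    subst heq
    have hmstab : (g₂⁻¹ * g₁) ∈ stab t₁ := by
      rw [MulAction.mem_stabilizer_iff]
      exact hm
    have hmth : (g₂⁻¹ * g₁) • th t₁ = th t₁ := by
      have h3 : (g₂⁻¹ * g₁) ∈ stab (th t₁) := by
        rw [hTheta_stab t₁ hG₁]
        exact hmstab
      exact MulAction.mem_stabilizer_iff.mp h3
    calc g₁ • th t₁ = (g₂ * (g₂⁻¹ * g₁)) • th t₁ := by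
          congr 1
          group
      _ = g₂ • ((g₂⁻¹ * g₁) • th t₁) := by rw [mul_smul]
      _ = g₂ • th t₁ := by rw [hmth]
  -- definition of ψ
  set ψ : (Fin n → ℝ) → (Fin n → ℝ) := fun y =>
    if h : ∃ (g : Equiv.Perm (Fin n)) (t : Fin n → ℝ), Good P t ∧ y = g • t
    then h.choose • th h.choose_spec.choose else y with hψ
  have hψspec : ∀ (g : Equiv.Perm (Fin n)) (t : Fin n → ℝ), Good P t → ψ (g • t) = g • th t := by
    intro g t hG
    have hex : ∃ (g' : Equiv.Perm (Fin n)) (t' : Fin n → ℝ), Good P t' ∧ g • t = g' • t' :=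
      ⟨g, t, hG, rfl⟩
    rw [hψ]
    simp only [dif_pos hex]
    obtain ⟨hG', hgt⟩ := hex.choose_spec.choose_spec
    exact hWD _ g _ t hG' hG hgt.symm
  -- symmetric facts for `Q`
  have hTheta' : ∀ s, Good Q s → th' s ∈ RH P (stab s) := by
    intro s hG
    rw [hth']
    simp only [← hG.2.1]
    exact huv2 (stab s) ⟨s, rfl⟩ s (good_mem_RH hG)
  have hTheta'_mem : ∀ s, Good Q s → th' s ∈ P :=
    fun s hG => (mem_CH.mp (Finset.mem_filter.mp (hTheta' s hG)).1).1
  have hTheta'_stab : ∀ s, Good Q s → stab (th' s) = stab s :=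
    fun s hG => (mem_CH.mp (Finset.mem_filter.mp (hTheta' s hG)).1).2
  have hTheta'_rorb : ∀ s, Good Q s → rorb P (stab s) (th' s) = th' s :=
    fun s hG => (Finset.mem_filter.mp (hTheta' s hG)).2
  have hGoodP' : ∀ s, Good Q s → Good P (th' s) := by
    intro s hG
    refine ⟨hTheta'_mem s hG, ?_, ?_⟩
    · rw [hTheta'_stab s hG, ← hG.2.1]
    · rw [hTheta'_stab s hG]
      exact hTheta'_rorb s hG
  have hfwd : ∀ s, Good Q s → th (th' s) = s := by
    intro s hG
    rw [hth]
    simp only [hTheta'_stab s hG, ← hG.2.1]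
    have h1 : th' s = (uvt (rep (stab s))).2 s := rfl
    rw [h1]
    simp only [← hG.2.1]
    exact huv4 (stab s) ⟨s, rfl⟩ s (good_mem_RH hG)
  have hdecompQ : ∀ z ∈ Q, ∃ (g : Equiv.Perm (Fin n)) (s : Fin n → ℝ),
      Good Q s ∧ z = g • s := by
    intro z hz
    obtain ⟨g₁, hg₁⟩ := rep_rel' (stab z)
    have hz' : (g₁ • z) ∈ Q := hQsym g₁ z hz
    have hzstab : stab (g₁ • z) = rep (stab z) := by rw [stab_smul, hg₁]
    have hzCH : (g₁ • z) ∈ CH Q (rep (stab z)) := mem_CH.mpr ⟨hz', hzstab⟩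
    have htCH : rorb Q (rep (stab z)) (g₁ • z) ∈ CH Q (rep (stab z)) := rorb_mem hzCH
    have htstab : stab (rorb Q (rep (stab z)) (g₁ • z)) = rep (stab z) := (mem_CH.mp htCH).2
    obtain ⟨m, hmN, hm⟩ := rorb_rel hzCH
    refine ⟨g₁⁻¹ * m, rorb Q (rep (stab z)) (g₁ • z), ⟨(mem_CH.mp htCH).1, ?_, ?_⟩, ?_⟩
    · rw [htstab, rep_idem]
    · rw [htstab]
      exact rorb_idem hzCH
    · rw [mul_smul, hm, inv_smul_smul]
  have hWD' : ∀ (g₁ g₂ : Equiv.Perm (Fin n)) (s₁ s₂ : Fin n → ℝ),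
      Good Q s₁ → Good Q s₂ → g₁ • s₁ = g₂ • s₂ → g₁ • th' s₁ = g₂ • th' s₂ := by
    intro g₁ g₂ s₁ s₂ hG₁ hG₂ h
    have hm : (g₂⁻¹ * g₁) • s₁ = s₂ := by rw [mul_smul, h, inv_smul_smul]
    have hstabeq : stab s₂ = cj (g₂⁻¹ * g₁) (stab s₁) := by rw [← stab_smul, hm]
    have hH : stab s₂ = stab s₁ := by
      have hr : rep (stab s₁) = rep (stab s₂) := rep_eq_of_rel ⟨g₂⁻¹ * g₁, hstabeq.symm⟩
      rw [hG₂.2.1, ← hr, ← hG₁.2.1]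
    have hmN : (g₂⁻¹ * g₁) ∈ (Subgroup.normalizer (stab s₁ : Set (Equiv.Perm (Fin n)))) := by
      rw [mem_norm_iff_cj, ← hstabeq]
      exact hH
    have hs₁CH : s₁ ∈ CH Q (stab s₁) := mem_CH.mpr ⟨hG₁.1, rfl⟩
    have hs₂CH : s₂ ∈ CH Q (stab s₁) := mem_CH.mpr ⟨hG₂.1, hH⟩
    have heq : s₁ = s₂ := by
      have h1 := rorb_eq_of_rel hs₁CH hs₂CH ⟨g₂⁻¹ * g₁, hmN, hm⟩
      rw [hG₁.2.2] at h1
      have h2 : rorb Q (stab s₁) s₂ = s₂ := by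
        have h3 := hG₂.2.2
        rw [hH] at h3
        exact h3
      rw [h2] at h1
      exact h1
    subst heq
    have hmstab : (g₂⁻¹ * g₁) ∈ stab s₁ := MulAction.mem_stabilizer_iff.mpr hm
    have hmth : (g₂⁻¹ * g₁) • th' s₁ = th' s₁ := by
      have h3 : (g₂⁻¹ * g₁) ∈ stab (th' s₁) := by
        rw [hTheta'_stab s₁ hG₁]
        exact hmstab
      exact MulAction.mem_stabilizer_iff.mp h3
    calc g₁ • th' s₁ = (g₂ * (g₂⁻¹ * g₁)) • th' s₁ := by
          congr 1
          group
      _ = g₂ • ((g₂⁻¹ * g₁) • th' s₁) := by rw [mul_smul]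
      _ = g₂ • th' s₁ := by rw [hmth]
  set ω : (Fin n → ℝ) → (Fin n → ℝ) := fun z =>
    if h : ∃ (g : Equiv.Perm (Fin n)) (s : Fin n → ℝ), Good Q s ∧ z = g • s
    then h.choose • th' h.choose_spec.choose else z with hω
  have hωspec : ∀ (g : Equiv.Perm (Fin n)) (s : Fin n → ℝ), Good Q s →
      ω (g • s) = g • th' s := by
    intro g s hG
    have hex : ∃ (g' : Equiv.Perm (Fin n)) (s' : Fin n → ℝ), Good Q s' ∧ g • s = g' • s' :=
      ⟨g, s, hG, rfl⟩
    rw [hω]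
    simp only [dif_pos hex]
    obtain ⟨hG', hgt⟩ := hex.choose_spec.choose_spec
    exact hWD' _ g _ s hG' hG hgt.symm
  refine ⟨ψ, ω, ?_, ?_, ?_, ?_, ?_⟩
  · intro y hy
    obtain ⟨g, t, hG, rfl⟩ := hdecomp y hy
    rw [hψspec g t hG]
    exact hQsym g _ (hTheta_mem t hG)
  · intro z hz
    obtain ⟨g, s, hG, rfl⟩ := hdecompQ z hz
    rw [hωspec g s hG]
    exact hPsym g _ (hTheta'_mem s hG)
  · intro y hy
    obtain ⟨g, t, hG, rfl⟩ := hdecomp y hy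
    rw [hψspec g t hG, hωspec g (th t) (hGoodQ t hG), hback t hG]
  · intro z hz
    obtain ⟨g, s, hG, rfl⟩ := hdecompQ z hz
    rw [hωspec g s hG, hψspec g (th' s) (hGoodP' s hG), hfwd s hG]
  · intro σ y hy
    obtain ⟨g, t, hG, rfl⟩ := hdecomp y hy
    rw [← mul_smul, hψspec (σ * g) t hG, hψspec g t hG, mul_smul]


end PartC

end Stmt16

open Stmt16 in
theorem stmt_16 {n N : ℕ} (f : Fin N → ((Fin n → ℝ) → ℝ)) (hf : LinearIndependent ℝ f)
    (hBsym : ∀ σ, ∀ g ∈ Set.range f, fsmul σ g ∈ Set.range f)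
    (a a' : Fin N → (Fin n → ℝ)) (ha : Function.Injective a) (ha' : Function.Injective a')
    (hPsym : ∀ σ, ∀ p ∈ Set.range a, psmul σ p ∈ Set.range a)
    (hP'sym : ∀ σ, ∀ p ∈ Set.range a', psmul σ p ∈ Set.range a')
    (hu : Unisolvent (Submodule.span ℝ (Set.range f)) a)
    (hu' : Unisolvent (Submodule.span ℝ (Set.range f)) a') :
    SEquiv (Set.range a) (Set.range a') := by
  classical
  set P : Finset (Fin n → ℝ) := Finset.univ.image a with hP
  set Q : Finset (Fin n → ℝ) := Finset.univ.image a' with hQ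
  have hPcoe : ∀ y : Fin n → ℝ, y ∈ Set.range a ↔ y ∈ P := by
    intro y; simp [hP]
  have hQcoe : ∀ y : Fin n → ℝ, y ∈ Set.range a' ↔ y ∈ Q := by
    intro y; simp [hQ]
  have hPsymF : ∀ (σ : Equiv.Perm (Fin n)) y, y ∈ P → σ • y ∈ P := by
    intro σ y hy
    have := hPsym σ y ((hPcoe y).mpr hy)
    exact (hPcoe _).mp this
  have hQsymF : ∀ (σ : Equiv.Perm (Fin n)) y, y ∈ Q → σ • y ∈ Q := by
    intro σ y hy
    have := hP'sym σ y ((hQcoe y).mpr hy)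
    exact (hQcoe _).mp this
  have hfix : ∀ σ : Equiv.Perm (Fin n),
      (P.filter fun y => σ • y = y).card = (Q.filter fun y => σ • y = y).card := by
    intro σ
    have e1 : (P.filter fun y => σ • y = y)
        = (Finset.univ.filter fun i => psmul σ (a i) = a i).image a := by
      rw [hP, Finset.filter_image]
      congr 1
    have e2 : (Q.filter fun y => σ • y = y)
        = (Finset.univ.filter fun i => psmul σ (a' i) = a' i).image a' := by
      rw [hQ, Finset.filter_image]
      congr 1
    rw [e1, e2, Finset.card_image_of_injective _ ha, Finset.card_image_of_injective _ ha']
    have h1 := lemA f hBsym a ha hPsym hu σ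
    have h2 := lemA f hBsym a' ha' hP'sym hu' σ
    have h3 := h1.trans h2.symm
    exact_mod_cast h3
  have hN := lemB2 P Q hfix
  obtain ⟨ψf, ωf, h1, h2, h3, h4, h5⟩ := construct P Q hPsymF hQsymF hN
  refine ⟨{ toFun := fun y => ⟨ψf y.val, (hQcoe _).mpr (h1 _ ((hPcoe _).mp y.prop))⟩,
            invFun := fun z => ⟨ωf z.val, (hPcoe _).mpr (h2 _ ((hQcoe _).mp z.prop))⟩,
            left_inv := fun y => Subtype.ext (h3 _ ((hPcoe _).mp y.prop)),
            right_inv := fun z => Subtype.ext (h4 _ ((hQcoe _).mp z.prop)) }, ?_⟩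
  intro σ z w hzw
  show σ • (ψf (z : Fin n → ℝ)) = ψf (w : Fin n → ℝ)
  have hz' : (z : Fin n → ℝ) ∈ P := (hPcoe _).mp z.prop
  rw [← h5 σ _ hz']
  exact congrArg ψf hzw
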